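/- For every positive integer s, the Dirichlet convolution (φ * X)(s) = ∑_{d|s} φ(d) X(s/d) satisfies (φ*X)(s) ≤ s^{2n−1}, where X(q) = q^{2m+1} ∏_{p|q}(1 − p^{−2m}) and m = n−1 ≥ 1. -/
import Mathlib


/-- The multiplicative function `X(q) = q^{2m+1} ∏_{p ∣ q} (1 - p^{-2m})`, with `m = n-1`. -/
noncomputable def Xfun (m s : ℕ) : ℝ :=
  (s : ℝ) ^ (2 * m + 1) * ∏ p ∈ s.primeFactors, (1 - (p : ℝ) ^ (-(2 * (m : ℤ))))

/-- The Dirichlet convolution `(φ * X)(s) = ∑_{d ∣ s} φ(d) X(s/d)`. -/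
noncomputable def phiX (m s : ℕ) : ℝ :=
  ∑ d ∈ s.divisors, (Nat.totient d : ℝ) * Xfun m (s / d)

lemma Xfun_one (m : ℕ) : Xfun m 1 = 1 := by simp [Xfun]

lemma Xfun_zero (m : ℕ) : Xfun m 0 = 0 := by simp [Xfun]

lemma Xfun_pp {m p : ℕ} (hp : p.Prime) {k : ℕ} (hk : k ≠ 0) :
    Xfun m (p ^ k) = ((p:ℝ) ^ (2*m+1)) ^ k * (1 - ((p:ℝ) ^ (2*m))⁻¹) := by
  unfold Xfun
  rw [Nat.primeFactors_prime_pow hk hp, Finset.prod_singleton]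
  push_cast
  rw [← pow_mul, ← pow_mul, mul_comm k]
  congr 1
  rw [zpow_neg]
  norm_cast

lemma Xfun_pp_succ {m p : ℕ} (hp : p.Prime) {t : ℕ} (ht : t ≠ 0) :
    Xfun m (p ^ (t+1)) = (p:ℝ) ^ (2*m+1) * Xfun m (p ^ t) := by
  rw [Xfun_pp hp (t.succ_ne_zero), Xfun_pp hp ht, pow_succ]
  ring

/-- totient as a real-valued arithmetic function -/
noncomputable def Phi : ArithmeticFunction ℝ := ⟨fun n => (Nat.totient n : ℝ), by simp⟩

noncomputable def Xa (m : ℕ) : ArithmeticFunction ℝ := ⟨Xfun m, Xfun_zero m⟩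

lemma Phi_mult : Phi.IsMultiplicative := by
  constructor
  · simp [Phi]
  · intro a b hab
    simp only [Phi, ArithmeticFunction.coe_mk, Nat.totient_mul hab]
    push_cast
    ring

lemma Xa_mult (m : ℕ) : (Xa m).IsMultiplicative := by
  constructor
  · simpa [Xa] using Xfun_one m
  · intro a b hab
    simp only [Xa, ArithmeticFunction.coe_mk]
    rcases eq_or_ne a 0 with rfl | ha
    · rw [Nat.coprime_zero_left] at hab
      simp [hab, Xfun_zero, Xfun_one]
    rcases eq_or_ne b 0 with rfl | hb
    · rw [Nat.coprime_zero_right] at hab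
      simp [hab, Xfun_zero, Xfun_one]
    unfold Xfun
    rw [Nat.primeFactors_mul ha hb,
      Finset.prod_union (Nat.Coprime.disjoint_primeFactors hab)]
    push_cast
    ring

lemma phiX_eq (m s : ℕ) : phiX m s = (Phi * Xa m) s := by
  rw [ArithmeticFunction.mul_apply,
    Nat.sum_divisorsAntidiagonal (fun i j => Phi i * Xa m j)]
  rfl

lemma phiX_pp_sum {m p : ℕ} (hp : p.Prime) (k : ℕ) :
    phiX m (p ^ k) = ∑ i ∈ Finset.range (k+1),
      (Nat.totient (p ^ i) : ℝ) * Xfun m (p ^ (k - i)) := by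
  unfold phiX
  rw [Nat.sum_divisors_prime_pow hp]
  refine Finset.sum_congr rfl fun i hi => ?_
  rw [Finset.mem_range] at hi
  rw [Nat.pow_div (by omega) hp.pos]

lemma phiX_pp {m p : ℕ} (hp : p.Prime) (j : ℕ) :
    phiX m (p ^ (j+1)) = ((p:ℝ) ^ (2*m+1)) ^ (j+1) - ((p:ℝ) ^ (2*m+1)) ^ j := by
  have hq : (0:ℝ) < (p:ℝ) := by exact_mod_cast hp.pos
  have hq2 : ((p:ℝ) ^ (2*m)) ≠ 0 := by positivity
  have hXp : (p:ℝ) ^ (2*m+1) * (1 - ((p:ℝ) ^ (2*m))⁻¹) = (p:ℝ) ^ (2*m+1) - (p:ℝ) := by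
    rw [mul_sub, mul_one, pow_succ, mul_comm ((p:ℝ)^(2*m)), mul_assoc,
      mul_inv_cancel₀ hq2, mul_one]
  induction j with
  | zero =>
      rw [phiX_pp_sum hp 1]
      rw [Finset.sum_range_succ, Finset.sum_range_one]
      simp only [Nat.sub_zero, Nat.sub_self, pow_zero, Nat.totient_one, Nat.cast_one,
        one_mul, Xfun_one, mul_one]
      rw [Xfun_pp hp one_ne_zero, pow_one, pow_one, Nat.totient_prime hp,
        Nat.cast_sub hp.one_le, hXp]
      push_cast
      ring
  | succ j ih =>
      have key : phiX m (p ^ (j+2)) = (p:ℝ) ^ (2*m+1) * phiX m (p ^ (j+1)) := by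
        rw [phiX_pp_sum hp (j+2), phiX_pp_sum hp (j+1)]
        rw [Finset.sum_range_succ (n := j+2), Finset.sum_range_succ (n := j+1),
          Finset.sum_range_succ (n := j+1) (f := fun i =>
            (Nat.totient (p ^ i) : ℝ) * Xfun m (p ^ (j+1-i)))]
        have h1 : ∑ i ∈ Finset.range (j+1),
            (Nat.totient (p ^ i) : ℝ) * Xfun m (p ^ (j+2-i))
            = (p:ℝ)^(2*m+1) * ∑ i ∈ Finset.range (j+1),
            (Nat.totient (p ^ i) : ℝ) * Xfun m (p ^ (j+1-i)) := by
          rw [Finset.mul_sum]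
          refine Finset.sum_congr rfl fun i hi => ?_
          rw [Finset.mem_range] at hi
          have ht : j + 1 - i ≠ 0 := by omega
          have he : j + 2 - i = (j + 1 - i) + 1 := by omega
          rw [he, Xfun_pp_succ hp ht]
          ring
        rw [h1]
        have h2 : j + 2 - (j+1) = 1 := by omega
        have h3 : j + 2 - (j+2) = 0 := by omega
        have h4 : j + 1 - (j+1) = 0 := by omega
        rw [h2, h3, h4]
        simp only [pow_zero, Xfun_one, mul_one]
        rw [Xfun_pp hp one_ne_zero, pow_one]
        have htot : (Nat.totient (p ^ (j+2)) : ℝ) = (p:ℝ) * (Nat.totient (p ^ (j+1)) : ℝ) := by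
          rw [Nat.totient_prime_pow hp (by omega : 0 < j+2),
            Nat.totient_prime_pow hp (by omega : 0 < j+1)]
          push_cast [Nat.cast_sub hp.one_le]
          ring
        rw [htot]
        rw [show (Nat.totient (p^(j+1)):ℝ) * ((p:ℝ)^(2*m+1) * (1 - ((p:ℝ)^(2*m))⁻¹))
          = (Nat.totient (p^(j+1)):ℝ) * ((p:ℝ)^(2*m+1) - (p:ℝ)) from by rw [hXp]]
        ring
      rw [key, ih]
      ring

/-- For every positive integer `s`, `(φ * X)(s) ≤ s^{2n-1}`,
where `m = n - 1 ≥ 1`. -/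
theorem phiX_le (n : ℕ) (hn : 2 ≤ n) (s : ℕ) (hs : 1 ≤ s) :
    phiX (n - 1) s ≤ (s : ℝ) ^ (2 * n - 1) := by
  set m := n - 1 with hm
  have hs0 : s ≠ 0 := by omega
  have hF : (Phi * Xa m).IsMultiplicative := Phi_mult.mul (Xa_mult m)
  have hL : 2 * m + 1 = 2 * n - 1 := by omega
  rw [phiX_eq, hF.multiplicative_factorization _ hs0, Finsupp.prod]
  have hstep : ∀ p ∈ s.factorization.support,
      0 ≤ (Phi * Xa m) (p ^ s.factorization p) ∧
      (Phi * Xa m) (p ^ s.factorization p) ≤ ((p:ℝ) ^ s.factorization p) ^ (2*n-1) := by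
    intro p hp
    have hpp : p.Prime := Nat.prime_of_mem_primeFactors
      ((Nat.support_factorization s) ▸ hp)
    have hk : s.factorization p ≠ 0 := Finsupp.mem_support_iff.mp hp
    obtain ⟨j, hj⟩ : ∃ j, s.factorization p = j + 1 := ⟨s.factorization p - 1, by omega⟩
    have h1 : (1:ℝ) ≤ (p:ℝ) ^ (2*m+1) := one_le_pow₀ (by exact_mod_cast hpp.one_le)
    rw [hj, ← phiX_eq, phiX_pp hpp j]
    constructor
    · have h2 : ((p:ℝ) ^ (2*m+1)) ^ j ≤ ((p:ℝ) ^ (2*m+1)) ^ (j+1) :=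
        pow_le_pow_right₀ h1 (Nat.le_succ j)
      linarith
    · calc ((p:ℝ) ^ (2*m+1)) ^ (j+1) - ((p:ℝ) ^ (2*m+1)) ^ j
          ≤ ((p:ℝ) ^ (2*m+1)) ^ (j+1) := sub_le_self _ (by positivity)
        _ = ((p:ℝ) ^ (j+1)) ^ (2*n-1) := by
            rw [← hL, ← pow_mul, ← pow_mul, mul_comm (2*m+1)]
  calc ∏ p ∈ s.factorization.support, (Phi * Xa m) (p ^ s.factorization p)
      ≤ ∏ p ∈ s.factorization.support, ((p:ℝ) ^ s.factorization p) ^ (2*n-1) :=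
        Finset.prod_le_prod (fun p hp => (hstep p hp).1) (fun p hp => (hstep p hp).2)
    _ = (∏ p ∈ s.factorization.support, (p:ℝ) ^ s.factorization p) ^ (2*n-1) := by
        rw [Finset.prod_pow]
    _ = (s:ℝ) ^ (2*n-1) := by
        congr 1
        have h := Nat.factorization_prod_pow_eq_self hs0
        calc ∏ p ∈ s.factorization.support, (p:ℝ) ^ s.factorization p
            = ((s.factorization.prod fun p k => p ^ k : ℕ) : ℝ) := by
              rw [Finsupp.prod]; push_cast; rfl
          _ = (s:ℝ) := by rw [h]
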